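/- arXiv:0907.0314 — 3 statements merged into one kernel-verified Lean document; each statement's English description precedes it below -/
import Mathlib

section
/- Let A = [[a,b],[c,d]] ∈ M₂(ℝ̄) be a nonzero matrix. If both columns of A are nonzero, then PC(A) is the closed interval in ℝ̂ with endpoints c − a and d − b (computed by the extended subtraction), i.e. PC(A) = {z ∈ ℝ̂ : min(c−a, d−b) ≤ z ≤ max(c−a, d−b)}. If the first column of A is zero then PC(A) = {d − b}, and if the second column is zero then PC(A) = {c − a}. In particular, PC(A) is always a closed convex subset of ℝ̂. -/
open scoped Classical ENNReal

/-- The tropical semiring `ℝ̄ = ℝ ∪ {-∞}`, carried by `WithBot ℝ`;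
tropical addition is `max` and tropical multiplication is `+`. -/
abbrev Rb : Type := WithBot ℝ

/-- Tropical matrix multiplication. -/
noncomputable def tMul {n : ℕ} (A B : Fin n → Fin n → Rb) : Fin n → Fin n → Rb :=
  fun i j => Finset.univ.sup fun k => A i k + B k j

/-- The column space of a matrix: all tropical linear combinations of its columns. -/
def ColSpace {n : ℕ} (A : Fin n → Fin n → Rb) : Set (Fin n → Rb) :=
  {v | ∃ c : Fin n → Rb, ∀ i, v i = Finset.univ.sup fun j => c j + A i j}

/-- The row space of a matrix: all tropical linear combinations of its rows. -/
def RowSpace {n : ℕ} (A : Fin n → Fin n → Rb) : Set (Fin n → Rb) :=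
  {v | ∃ c : Fin n → Rb, ∀ j, v j = Finset.univ.sup fun i => c i + A i j}

abbrev Mat2 : Type := Fin 2 → Fin 2 → Rb

/-- Inclusion of `ℝ̄` into the projective line `ℝ̂ = ℝ ∪ {-∞, +∞}` (modelled by `EReal`). -/
noncomputable def toE : Rb → EReal := WithBot.recBotCoe ⊥ (fun r : ℝ => (r : EReal))

/-- Projection of a vector `(a, b)` to `b - a ∈ ℝ̂`. -/
noncomputable def projPt (v : Fin 2 → Rb) : EReal := toE (v 1) - toE (v 0)

def zeroVec : Fin 2 → Rb := fun _ => ⊥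

/-- Projective column space. -/
noncomputable def PC (A : Mat2) : Set EReal :=
  {z | ∃ v ∈ ColSpace A, v ≠ zeroVec ∧ projPt v = z}

/-- Projective row space. -/
noncomputable def PR (A : Mat2) : Set EReal :=
  {z | ∃ v ∈ RowSpace A, v ≠ zeroVec ∧ projPt v = z}

/-- The metric `δ` on `ℝ̂`. -/
noncomputable def delta (x y : EReal) : ℝ≥0∞ :=
  if (∃ a : ℝ, x = (a : EReal)) ∧ (∃ b : ℝ, y = (b : EReal)) then
    ENNReal.ofReal |x.toReal - y.toReal|
  else if x = y then 0 else ⊤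

/-- `M` embeds isometrically into `N`. -/
def IsomEmbed (M N : Set EReal) : Prop :=
  ∃ f : EReal → EReal, Set.MapsTo f M N ∧ Set.InjOn f M ∧
    ∀ x ∈ M, ∀ y ∈ M, delta (f x) (f y) = delta x y

/-- `M` and `N` are isometric. -/
def Isom (M N : Set EReal) : Prop :=
  ∃ f : EReal → EReal, Set.BijOn f M N ∧
    ∀ x ∈ M, ∀ y ∈ M, delta (f x) (f y) = delta x y

/-- Closed convex subsets of `ℝ̂`: the empty set, singletons and closed intervals. -/
def IsClosedConvex (S : Set EReal) : Prop :=
  S = ∅ ∨ ∃ x y : EReal, x ≤ y ∧ S = Set.Icc x y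

@[simp] lemma toE_bot : toE ⊥ = ⊥ := rfl
@[simp] lemma toE_coe (r : ℝ) : toE (r : Rb) = (r : EReal) := rfl
@[simp] lemma ecoe_sub_bot (r : ℝ) : (r : EReal) - ⊥ = ⊤ := rfl
@[simp] lemma ebot_sub (x : EReal) : (⊥ : EReal) - x = ⊥ := by cases x <;> rfl
@[simp] lemma coe_min' (p q : ℝ) : min (p : EReal) (q : EReal) = ((min p q : ℝ) : EReal) := by
  rcases le_total p q with h | h <;> simp [min_eq_left, min_eq_right, h, EReal.coe_le_coe_iff]
@[simp] lemma coe_max' (p q : ℝ) : max (p : EReal) (q : EReal) = ((max p q : ℝ) : EReal) := by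
  rcases le_total p q with h | h <;> simp [max_eq_left, max_eq_right, h, EReal.coe_le_coe_iff]
@[simp] lemma emin_top_l (x : EReal) : min ⊤ x = x := min_eq_right le_top
@[simp] lemma emin_top_r (x : EReal) : min x ⊤ = x := min_eq_left le_top
@[simp] lemma emax_top_l (x : EReal) : max ⊤ x = ⊤ := max_eq_left le_top
@[simp] lemma emax_top_r (x : EReal) : max x ⊤ = ⊤ := max_eq_right le_top
@[simp] lemma emin_bot_l (x : EReal) : min ⊥ x = ⊥ := min_eq_left bot_le
@[simp] lemma emin_bot_r (x : EReal) : min x ⊥ = ⊥ := min_eq_right bot_le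
@[simp] lemma emax_bot_l (x : EReal) : max ⊥ x = x := max_eq_right bot_le
@[simp] lemma emax_bot_r (x : EReal) : max x ⊥ = x := max_eq_left bot_le

lemma proj_scale (y : ℝ) (b d : Rb) :
    toE ((y : Rb) + d) - toE ((y : Rb) + b) = toE d - toE b := by
  induction b using WithBot.recBotCoe with
  | bot =>
    induction d using WithBot.recBotCoe with
    | bot => simp
    | coe D => simp [← WithBot.coe_add, sub_eq_add_neg, EReal.add_top_of_ne_bot]
  | coe B =>
    induction d using WithBot.recBotCoe with
    | bot => simp
    | coe D =>
      simp only [← WithBot.coe_add, toE_coe, ← EReal.coe_sub]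
      norm_num

lemma real_core (A B C D x y : ℝ) :
    min (C-A) (D-B) ≤ (x+C) ⊔ (y+D) - (x+A) ⊔ (y+B) ∧
    (x+C) ⊔ (y+D) - (x+A) ⊔ (y+B) ≤ max (C-A) (D-B) := by
  constructor <;>
  · rcases le_total (x+C) (y+D) with h1|h1 <;> rcases le_total (x+A) (y+B) with h2|h2 <;>
      simp [min_def, max_def] <;> split_ifs <;> linarith

lemma proj_bound (a b c d : Rb) (hu : ¬(a = ⊥ ∧ c = ⊥)) (hw : ¬(b = ⊥ ∧ d = ⊥)) (x y : Rb)
    (hnz : ¬((x + a) ⊔ (y + b) = ⊥ ∧ (x + c) ⊔ (y + d) = ⊥)) :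
    min (toE c - toE a) (toE d - toE b) ≤ toE ((x + c) ⊔ (y + d)) - toE ((x + a) ⊔ (y + b)) ∧
      toE ((x + c) ⊔ (y + d)) - toE ((x + a) ⊔ (y + b)) ≤ max (toE c - toE a) (toE d - toE b) := by
  induction x using WithBot.recBotCoe with
  | bot =>
    induction y using WithBot.recBotCoe with
    | bot => simp at hnz
    | coe y =>
      simp only [WithBot.bot_add, bot_sup_eq]
      rw [proj_scale]
      exact ⟨min_le_right _ _, le_max_right _ _⟩
  | coe x =>
    induction y using WithBot.recBotCoe with
    | bot =>
      simp only [WithBot.bot_add, sup_bot_eq]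
      rw [proj_scale]
      exact ⟨min_le_left _ _, le_max_left _ _⟩
    | coe y =>
      clear hnz
      induction a using WithBot.recBotCoe with
      | bot =>
        induction c using WithBot.recBotCoe with
        | bot => exact absurd ⟨rfl, rfl⟩ hu
        | coe C =>
          induction b using WithBot.recBotCoe with
          | bot =>
            induction d using WithBot.recBotCoe with
            | bot => exact absurd ⟨rfl, rfl⟩ hw
            | coe D =>
              simp only [← WithBot.coe_add, ← WithBot.coe_sup, WithBot.bot_add, WithBot.add_bot, bot_sup_eq, sup_bot_eq, toE_bot, toE_coe, ← EReal.coe_sub, ecoe_sub_bot, ebot_sub, emin_top_l, emin_top_r, emax_top_l, emax_top_r, emin_bot_l, emin_bot_r, emax_bot_l, emax_bot_r, coe_min', coe_max']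
              exact ⟨le_top, le_top⟩
          | coe B =>
            induction d using WithBot.recBotCoe with
            | bot =>
              simp only [← WithBot.coe_add, ← WithBot.coe_sup, WithBot.bot_add, WithBot.add_bot, bot_sup_eq, sup_bot_eq, toE_bot, toE_coe, ← EReal.coe_sub, ecoe_sub_bot, ebot_sub, emin_top_l, emin_top_r, emax_top_l, emax_top_r, emin_bot_l, emin_bot_r, emax_bot_l, emax_bot_r, coe_min', coe_max']
              exact ⟨bot_le, le_top⟩
            | coe D =>
              simp only [← WithBot.coe_add, ← WithBot.coe_sup, WithBot.bot_add, WithBot.add_bot, bot_sup_eq, sup_bot_eq, toE_bot, toE_coe, ← EReal.coe_sub, ecoe_sub_bot, ebot_sub, emin_top_l, emin_top_r, emax_top_l, emax_top_r, emin_bot_l, emin_bot_r, emax_bot_l, emax_bot_r, coe_min', coe_max']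
              refine ⟨EReal.coe_le_coe_iff.2 (show D - B ≤ (x+C) ⊔ (y+D) - (y+B) from ?_), le_top⟩
              have h := le_sup_right (a := x + C) (b := y + D)
              linarith
      | coe A =>
        induction c using WithBot.recBotCoe with
        | bot =>
          induction b using WithBot.recBotCoe with
          | bot =>
            induction d using WithBot.recBotCoe with
            | bot => exact absurd ⟨rfl, rfl⟩ hw
            | coe D =>
              simp only [← WithBot.coe_add, ← WithBot.coe_sup, WithBot.bot_add, WithBot.add_bot, bot_sup_eq, sup_bot_eq, toE_bot, toE_coe, ← EReal.coe_sub, ecoe_sub_bot, ebot_sub, emin_top_l, emin_top_r, emax_top_l, emax_top_r, emin_bot_l, emin_bot_r, emax_bot_l, emax_bot_r, coe_min', coe_max']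
              exact ⟨bot_le, le_top⟩
          | coe B =>
            induction d using WithBot.recBotCoe with
            | bot =>
              simp only [← WithBot.coe_add, ← WithBot.coe_sup, WithBot.bot_add, WithBot.add_bot, bot_sup_eq, sup_bot_eq, toE_bot, toE_coe, ← EReal.coe_sub, ecoe_sub_bot, ebot_sub, emin_top_l, emin_top_r, emax_top_l, emax_top_r, emin_bot_l, emin_bot_r, emax_bot_l, emax_bot_r, coe_min', coe_max']
              exact ⟨bot_le, le_rfl⟩
            | coe D =>
              simp only [← WithBot.coe_add, ← WithBot.coe_sup, WithBot.bot_add, WithBot.add_bot, bot_sup_eq, sup_bot_eq, toE_bot, toE_coe, ← EReal.coe_sub, ecoe_sub_bot, ebot_sub, emin_top_l, emin_top_r, emax_top_l, emax_top_r, emin_bot_l, emin_bot_r, emax_bot_l, emax_bot_r, coe_min', coe_max']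
              refine ⟨bot_le, EReal.coe_le_coe_iff.2 (show (y+D) - (x+A) ⊔ (y+B) ≤ D - B from ?_)⟩
              have h := le_sup_right (a := x + A) (b := y + B)
              linarith
        | coe C =>
          induction b using WithBot.recBotCoe with
          | bot =>
            induction d using WithBot.recBotCoe with
            | bot => exact absurd ⟨rfl, rfl⟩ hw
            | coe D =>
              simp only [← WithBot.coe_add, ← WithBot.coe_sup, WithBot.bot_add, WithBot.add_bot, bot_sup_eq, sup_bot_eq, toE_bot, toE_coe, ← EReal.coe_sub, ecoe_sub_bot, ebot_sub, emin_top_l, emin_top_r, emax_top_l, emax_top_r, emin_bot_l, emin_bot_r, emax_bot_l, emax_bot_r, coe_min', coe_max']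
              refine ⟨EReal.coe_le_coe_iff.2 (show C - A ≤ (x+C) ⊔ (y+D) - (x+A) from ?_), le_top⟩
              have h := le_sup_left (a := x + C) (b := y + D)
              linarith
          | coe B =>
            induction d using WithBot.recBotCoe with
            | bot =>
              simp only [← WithBot.coe_add, ← WithBot.coe_sup, WithBot.bot_add, WithBot.add_bot, bot_sup_eq, sup_bot_eq, toE_bot, toE_coe, ← EReal.coe_sub, ecoe_sub_bot, ebot_sub, emin_top_l, emin_top_r, emax_top_l, emax_top_r, emin_bot_l, emin_bot_r, emax_bot_l, emax_bot_r, coe_min', coe_max']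
              refine ⟨bot_le, EReal.coe_le_coe_iff.2 (show (x+C) - (x+A) ⊔ (y+B) ≤ C - A from ?_)⟩
              have h := le_sup_left (a := x + A) (b := y + B)
              linarith
            | coe D =>
              simp only [← WithBot.coe_add, ← WithBot.coe_sup, WithBot.bot_add, WithBot.add_bot, bot_sup_eq, sup_bot_eq, toE_bot, toE_coe, ← EReal.coe_sub, ecoe_sub_bot, ebot_sub, emin_top_l, emin_top_r, emax_top_l, emax_top_r, emin_bot_l, emin_bot_r, emax_bot_l, emax_bot_r, coe_min', coe_max']
              exact ⟨EReal.coe_le_coe_iff.2 (real_core A B C D x y).1,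
                EReal.coe_le_coe_iff.2 (real_core A B C D x y).2⟩

lemma ne_bot_of_coe_le {p : ℝ} {z : EReal} (h : (p : EReal) ≤ z) : z ≠ ⊥ := by
  intro hz; rw [hz, le_bot_iff] at h; exact EReal.coe_ne_bot _ h
lemma ne_top_of_le_coe {p : ℝ} {z : EReal} (h : z ≤ (p : EReal)) : z ≠ ⊤ := by
  intro hz; rw [hz, top_le_iff] at h; exact EReal.coe_ne_top _ h

lemma proj_exists (a b c d : Rb) (hu : ¬(a = ⊥ ∧ c = ⊥)) (hw : ¬(b = ⊥ ∧ d = ⊥)) (z : EReal)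
    (h1 : min (toE c - toE a) (toE d - toE b) ≤ z)
    (h2 : z ≤ max (toE c - toE a) (toE d - toE b)) :
    ∃ x y : Rb, ¬((x + a) ⊔ (y + b) = ⊥ ∧ (x + c) ⊔ (y + d) = ⊥) ∧
      toE ((x + c) ⊔ (y + d)) - toE ((x + a) ⊔ (y + b)) = z := by
  induction a using WithBot.recBotCoe with
  | bot =>
    induction c using WithBot.recBotCoe with
    | bot => exact absurd ⟨rfl, rfl⟩ hu
    | coe C =>
      induction b using WithBot.recBotCoe with
      | bot =>
        induction d using WithBot.recBotCoe with
        | bot => exact absurd ⟨rfl, rfl⟩ hw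
        | coe D =>
          -- p3 : z = ⊤
          simp only [← WithBot.coe_add, ← WithBot.coe_sup, WithBot.bot_add, WithBot.add_bot, bot_sup_eq, sup_bot_eq, toE_bot, toE_coe, ← EReal.coe_sub, ecoe_sub_bot, ebot_sub, emin_top_l, emin_top_r, emax_top_l, emax_top_r, emin_bot_l, emin_bot_r, emax_bot_l, emax_bot_r, coe_min', coe_max'] at h1
          have hz : z = ⊤ := top_le_iff.1 h1
          subst hz
          exact ⟨(0:ℝ), ⊥, by simp, by simp [← WithBot.coe_add, ← WithBot.coe_sup, WithBot.bot_add, WithBot.add_bot, bot_sup_eq, sup_bot_eq, toE_bot, toE_coe, ← EReal.coe_sub, ecoe_sub_bot, ebot_sub, emin_top_l, emin_top_r, emax_top_l, emax_top_r, emin_bot_l, emin_bot_r, emax_bot_l, emax_bot_r, coe_min', coe_max']⟩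
      | coe B =>
        induction d using WithBot.recBotCoe with
        | bot =>
          -- p4 : all z
          induction z using EReal.rec with
          | bot => exact ⟨⊥, (0:ℝ), by simp, by simp [← WithBot.coe_add, ← WithBot.coe_sup, WithBot.bot_add, WithBot.add_bot, bot_sup_eq, sup_bot_eq, toE_bot, toE_coe, ← EReal.coe_sub, ecoe_sub_bot, ebot_sub, emin_top_l, emin_top_r, emax_top_l, emax_top_r, emin_bot_l, emin_bot_r, emax_bot_l, emax_bot_r, coe_min', coe_max']⟩
          | top => exact ⟨(0:ℝ), ⊥, by simp, by simp [← WithBot.coe_add, ← WithBot.coe_sup, WithBot.bot_add, WithBot.add_bot, bot_sup_eq, sup_bot_eq, toE_bot, toE_coe, ← EReal.coe_sub, ecoe_sub_bot, ebot_sub, emin_top_l, emin_top_r, emax_top_l, emax_top_r, emin_bot_l, emin_bot_r, emax_bot_l, emax_bot_r, coe_min', coe_max']⟩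
          | coe r =>
            refine ⟨((r - C : ℝ) : Rb), ((-B : ℝ) : Rb), by simp, ?_⟩
            simp only [← WithBot.coe_add, ← WithBot.coe_sup, WithBot.bot_add, WithBot.add_bot, bot_sup_eq, sup_bot_eq, toE_bot, toE_coe, ← EReal.coe_sub, ecoe_sub_bot, ebot_sub, emin_top_l, emin_top_r, emax_top_l, emax_top_r, emin_bot_l, emin_bot_r, emax_bot_l, emax_bot_r, coe_min', coe_max']
            rw [EReal.coe_eq_coe_iff]
            ring
        | coe D =>
          -- p2 : ↑(D-B) ≤ z
          simp only [← WithBot.coe_add, ← WithBot.coe_sup, WithBot.bot_add, WithBot.add_bot, bot_sup_eq, sup_bot_eq, toE_bot, toE_coe, ← EReal.coe_sub, ecoe_sub_bot, ebot_sub, emin_top_l, emin_top_r, emax_top_l, emax_top_r, emin_bot_l, emin_bot_r, emax_bot_l, emax_bot_r, coe_min', coe_max'] at h1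
          rcases eq_or_ne z ⊤ with rfl | htop
          · exact ⟨(0:ℝ), ⊥, by simp, by simp [← WithBot.coe_add, ← WithBot.coe_sup, WithBot.bot_add, WithBot.add_bot, bot_sup_eq, sup_bot_eq, toE_bot, toE_coe, ← EReal.coe_sub, ecoe_sub_bot, ebot_sub, emin_top_l, emin_top_r, emax_top_l, emax_top_r, emin_bot_l, emin_bot_r, emax_bot_l, emax_bot_r, coe_min', coe_max']⟩
          · have hbot : z ≠ ⊥ := ne_bot_of_coe_le h1
            obtain ⟨r, rfl⟩ : ∃ r : ℝ, z = (r : EReal) :=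
              ⟨z.toReal, (EReal.coe_toReal htop hbot).symm⟩
            have hq : D - B ≤ r := EReal.coe_le_coe_iff.1 h1
            refine ⟨((r - C : ℝ) : Rb), ((-B : ℝ) : Rb), by simp, ?_⟩
            simp only [← WithBot.coe_add, ← WithBot.coe_sup, WithBot.bot_add, WithBot.add_bot, bot_sup_eq, sup_bot_eq, toE_bot, toE_coe, ← EReal.coe_sub, ecoe_sub_bot, ebot_sub, emin_top_l, emin_top_r, emax_top_l, emax_top_r, emin_bot_l, emin_bot_r, emax_bot_l, emax_bot_r, coe_min', coe_max']
            rw [EReal.coe_eq_coe_iff, max_eq_left (by linarith)]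
            ring
  | coe A =>
    induction c using WithBot.recBotCoe with
    | bot =>
      induction b using WithBot.recBotCoe with
      | bot =>
        induction d using WithBot.recBotCoe with
        | bot => exact absurd ⟨rfl, rfl⟩ hw
        | coe D =>
          -- p6 : all z
          induction z using EReal.rec with
          | bot => exact ⟨(0:ℝ), ⊥, by simp, by simp [← WithBot.coe_add, ← WithBot.coe_sup, WithBot.bot_add, WithBot.add_bot, bot_sup_eq, sup_bot_eq, toE_bot, toE_coe, ← EReal.coe_sub, ecoe_sub_bot, ebot_sub, emin_top_l, emin_top_r, emax_top_l, emax_top_r, emin_bot_l, emin_bot_r, emax_bot_l, emax_bot_r, coe_min', coe_max']⟩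
          | top => exact ⟨⊥, (0:ℝ), by simp, by simp [← WithBot.coe_add, ← WithBot.coe_sup, WithBot.bot_add, WithBot.add_bot, bot_sup_eq, sup_bot_eq, toE_bot, toE_coe, ← EReal.coe_sub, ecoe_sub_bot, ebot_sub, emin_top_l, emin_top_r, emax_top_l, emax_top_r, emin_bot_l, emin_bot_r, emax_bot_l, emax_bot_r, coe_min', coe_max']⟩
          | coe r =>
            refine ⟨((D - r - A : ℝ) : Rb), ((0:ℝ) : Rb), by simp, ?_⟩
            simp only [← WithBot.coe_add, ← WithBot.coe_sup, WithBot.bot_add, WithBot.add_bot, bot_sup_eq, sup_bot_eq, toE_bot, toE_coe, ← EReal.coe_sub, ecoe_sub_bot, ebot_sub, emin_top_l, emin_top_r, emax_top_l, emax_top_r, emin_bot_l, emin_bot_r, emax_bot_l, emax_bot_r, coe_min', coe_max']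
            rw [EReal.coe_eq_coe_iff]
            ring
      | coe B =>
        induction d using WithBot.recBotCoe with
        | bot =>
          -- p7 : z = ⊥
          simp only [← WithBot.coe_add, ← WithBot.coe_sup, WithBot.bot_add, WithBot.add_bot, bot_sup_eq, sup_bot_eq, toE_bot, toE_coe, ← EReal.coe_sub, ecoe_sub_bot, ebot_sub, emin_top_l, emin_top_r, emax_top_l, emax_top_r, emin_bot_l, emin_bot_r, emax_bot_l, emax_bot_r, coe_min', coe_max'] at h2
          have hz : z = ⊥ := le_bot_iff.1 h2
          subst hz
          exact ⟨(0:ℝ), ⊥, by simp, by simp [← WithBot.coe_add, ← WithBot.coe_sup, WithBot.bot_add, WithBot.add_bot, bot_sup_eq, sup_bot_eq, toE_bot, toE_coe, ← EReal.coe_sub, ecoe_sub_bot, ebot_sub, emin_top_l, emin_top_r, emax_top_l, emax_top_r, emin_bot_l, emin_bot_r, emax_bot_l, emax_bot_r, coe_min', coe_max']⟩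
        | coe D =>
          -- p5 : z ≤ ↑(D-B)
          simp only [← WithBot.coe_add, ← WithBot.coe_sup, WithBot.bot_add, WithBot.add_bot, bot_sup_eq, sup_bot_eq, toE_bot, toE_coe, ← EReal.coe_sub, ecoe_sub_bot, ebot_sub, emin_top_l, emin_top_r, emax_top_l, emax_top_r, emin_bot_l, emin_bot_r, emax_bot_l, emax_bot_r, coe_min', coe_max'] at h2
          rcases eq_or_ne z ⊥ with rfl | hbot
          · exact ⟨(0:ℝ), ⊥, by simp, by simp [← WithBot.coe_add, ← WithBot.coe_sup, WithBot.bot_add, WithBot.add_bot, bot_sup_eq, sup_bot_eq, toE_bot, toE_coe, ← EReal.coe_sub, ecoe_sub_bot, ebot_sub, emin_top_l, emin_top_r, emax_top_l, emax_top_r, emin_bot_l, emin_bot_r, emax_bot_l, emax_bot_r, coe_min', coe_max']⟩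
          · have htop : z ≠ ⊤ := ne_top_of_le_coe h2
            obtain ⟨r, rfl⟩ : ∃ r : ℝ, z = (r : EReal) :=
              ⟨z.toReal, (EReal.coe_toReal htop hbot).symm⟩
            have hq : r ≤ D - B := EReal.coe_le_coe_iff.1 h2
            refine ⟨((D - r - A : ℝ) : Rb), ((0:ℝ) : Rb), by simp, ?_⟩
            simp only [← WithBot.coe_add, ← WithBot.coe_sup, WithBot.bot_add, WithBot.add_bot, bot_sup_eq, sup_bot_eq, toE_bot, toE_coe, ← EReal.coe_sub, ecoe_sub_bot, ebot_sub, emin_top_l, emin_top_r, emax_top_l, emax_top_r, emin_bot_l, emin_bot_r, emax_bot_l, emax_bot_r, coe_min', coe_max']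
            rw [EReal.coe_eq_coe_iff, max_eq_left (by linarith)]
            ring
    | coe C =>
      induction b using WithBot.recBotCoe with
      | bot =>
        induction d using WithBot.recBotCoe with
        | bot => exact absurd ⟨rfl, rfl⟩ hw
        | coe D =>
          -- p8 : ↑(C-A) ≤ z
          simp only [← WithBot.coe_add, ← WithBot.coe_sup, WithBot.bot_add, WithBot.add_bot, bot_sup_eq, sup_bot_eq, toE_bot, toE_coe, ← EReal.coe_sub, ecoe_sub_bot, ebot_sub, emin_top_l, emin_top_r, emax_top_l, emax_top_r, emin_bot_l, emin_bot_r, emax_bot_l, emax_bot_r, coe_min', coe_max'] at h1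
          rcases eq_or_ne z ⊤ with rfl | htop
          · exact ⟨⊥, (0:ℝ), by simp, by simp [← WithBot.coe_add, ← WithBot.coe_sup, WithBot.bot_add, WithBot.add_bot, bot_sup_eq, sup_bot_eq, toE_bot, toE_coe, ← EReal.coe_sub, ecoe_sub_bot, ebot_sub, emin_top_l, emin_top_r, emax_top_l, emax_top_r, emin_bot_l, emin_bot_r, emax_bot_l, emax_bot_r, coe_min', coe_max']⟩
          · have hbot : z ≠ ⊥ := ne_bot_of_coe_le h1
            obtain ⟨r, rfl⟩ : ∃ r : ℝ, z = (r : EReal) :=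
              ⟨z.toReal, (EReal.coe_toReal htop hbot).symm⟩
            have hp : C - A ≤ r := EReal.coe_le_coe_iff.1 h1
            refine ⟨((-A : ℝ) : Rb), ((r - D : ℝ) : Rb), by simp, ?_⟩
            simp only [← WithBot.coe_add, ← WithBot.coe_sup, WithBot.bot_add, WithBot.add_bot, bot_sup_eq, sup_bot_eq, toE_bot, toE_coe, ← EReal.coe_sub, ecoe_sub_bot, ebot_sub, emin_top_l, emin_top_r, emax_top_l, emax_top_r, emin_bot_l, emin_bot_r, emax_bot_l, emax_bot_r, coe_min', coe_max']
            rw [EReal.coe_eq_coe_iff, max_eq_right (by linarith)]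
            ring
      | coe B =>
        induction d using WithBot.recBotCoe with
        | bot =>
          -- p9 : z ≤ ↑(C-A)
          simp only [← WithBot.coe_add, ← WithBot.coe_sup, WithBot.bot_add, WithBot.add_bot, bot_sup_eq, sup_bot_eq, toE_bot, toE_coe, ← EReal.coe_sub, ecoe_sub_bot, ebot_sub, emin_top_l, emin_top_r, emax_top_l, emax_top_r, emin_bot_l, emin_bot_r, emax_bot_l, emax_bot_r, coe_min', coe_max'] at h2
          rcases eq_or_ne z ⊥ with rfl | hbot
          · exact ⟨⊥, (0:ℝ), by simp, by simp [← WithBot.coe_add, ← WithBot.coe_sup, WithBot.bot_add, WithBot.add_bot, bot_sup_eq, sup_bot_eq, toE_bot, toE_coe, ← EReal.coe_sub, ecoe_sub_bot, ebot_sub, emin_top_l, emin_top_r, emax_top_l, emax_top_r, emin_bot_l, emin_bot_r, emax_bot_l, emax_bot_r, coe_min', coe_max']⟩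
          · have htop : z ≠ ⊤ := ne_top_of_le_coe h2
            obtain ⟨r, rfl⟩ : ∃ r : ℝ, z = (r : EReal) :=
              ⟨z.toReal, (EReal.coe_toReal htop hbot).symm⟩
            have hp : r ≤ C - A := EReal.coe_le_coe_iff.1 h2
            refine ⟨((0:ℝ) : Rb), ((C - r - B : ℝ) : Rb), by simp, ?_⟩
            simp only [← WithBot.coe_add, ← WithBot.coe_sup, WithBot.bot_add, WithBot.add_bot, bot_sup_eq, sup_bot_eq, toE_bot, toE_coe, ← EReal.coe_sub, ecoe_sub_bot, ebot_sub, emin_top_l, emin_top_r, emax_top_l, emax_top_r, emin_bot_l, emin_bot_r, emax_bot_l, emax_bot_r, coe_min', coe_max']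
            rw [EReal.coe_eq_coe_iff, max_eq_right (by linarith)]
            ring
        | coe D =>
          -- p1 : all real
          simp only [← WithBot.coe_add, ← WithBot.coe_sup, WithBot.bot_add, WithBot.add_bot, bot_sup_eq, sup_bot_eq, toE_bot, toE_coe, ← EReal.coe_sub, ecoe_sub_bot, ebot_sub, emin_top_l, emin_top_r, emax_top_l, emax_top_r, emin_bot_l, emin_bot_r, emax_bot_l, emax_bot_r, coe_min', coe_max'] at h1 h2
          have hbot : z ≠ ⊥ := ne_bot_of_coe_le h1
          have htop : z ≠ ⊤ := ne_top_of_le_coe h2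
          obtain ⟨r, rfl⟩ : ∃ r : ℝ, z = (r : EReal) :=
            ⟨z.toReal, (EReal.coe_toReal htop hbot).symm⟩
          have h1' : min (C - A) (D - B) ≤ r := EReal.coe_le_coe_iff.1 h1
          have h2' : r ≤ max (C - A) (D - B) := EReal.coe_le_coe_iff.1 h2
          rcases le_total (C - A) (D - B) with hpq | hpq
          · have hp : C - A ≤ r := le_trans (by rw [min_eq_left hpq]) h1'
            have hq : r ≤ D - B := le_trans h2' (by rw [max_eq_right hpq])
            refine ⟨((-A : ℝ) : Rb), ((r - D : ℝ) : Rb), by simp, ?_⟩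
            simp only [← WithBot.coe_add, ← WithBot.coe_sup, WithBot.bot_add, WithBot.add_bot, bot_sup_eq, sup_bot_eq, toE_bot, toE_coe, ← EReal.coe_sub, ecoe_sub_bot, ebot_sub, emin_top_l, emin_top_r, emax_top_l, emax_top_r, emin_bot_l, emin_bot_r, emax_bot_l, emax_bot_r, coe_min', coe_max']
            rw [EReal.coe_eq_coe_iff,
              max_eq_right (by linarith), max_eq_left (by linarith)]
            ring
          · have hq : D - B ≤ r := le_trans (by rw [min_eq_right hpq]) h1'
            have hp : r ≤ C - A := le_trans h2' (by rw [max_eq_left hpq])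
            refine ⟨((r - C : ℝ) : Rb), ((-B : ℝ) : Rb), by simp, ?_⟩
            simp only [← WithBot.coe_add, ← WithBot.coe_sup, WithBot.bot_add, WithBot.add_bot, bot_sup_eq, sup_bot_eq, toE_bot, toE_coe, ← EReal.coe_sub, ecoe_sub_bot, ebot_sub, emin_top_l, emin_top_r, emax_top_l, emax_top_r, emin_bot_l, emin_bot_r, emax_bot_l, emax_bot_r, coe_min', coe_max']
            rw [EReal.coe_eq_coe_iff,
              max_eq_left (by linarith), max_eq_right (by linarith)]
            ring


lemma sup_univ_two (f : Fin 2 → Rb) : Finset.univ.sup f = f 0 ⊔ f 1 := by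
  rw [show (Finset.univ : Finset (Fin 2)) = {0, 1} from rfl]; simp

lemma ne_zeroVec_iff (v : Fin 2 → Rb) : v ≠ zeroVec ↔ ¬(v 0 = ⊥ ∧ v 1 = ⊥) := by
  constructor
  · intro h hc
    exact h (funext fun i => by fin_cases i <;> simp [zeroVec, hc.1, hc.2])
  · intro h hc
    exact h ⟨by rw [hc]; rfl, by rw [hc]; rfl⟩

lemma PC_eq (a b c d : Rb) :
    PC ![![a,b],![c,d]] = {z | ∃ x y : Rb,
      ¬((x + a) ⊔ (y + b) = ⊥ ∧ (x + c) ⊔ (y + d) = ⊥) ∧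
      toE ((x + c) ⊔ (y + d)) - toE ((x + a) ⊔ (y + b)) = z} := by
  ext z
  constructor
  · rintro ⟨v, ⟨cf, hcf⟩, hnz, hproj⟩
    have h0 := hcf 0
    have h1 := hcf 1
    rw [sup_univ_two] at h0 h1
    simp only [Matrix.cons_val_zero, Matrix.cons_val_one, Matrix.head_cons] at h0 h1
    refine ⟨cf 0, cf 1, ?_, ?_⟩
    · rw [← h0, ← h1]; exact (ne_zeroVec_iff v).1 hnz
    · rw [← h0, ← h1]; exact hproj
  · rintro ⟨x, y, hnz, hproj⟩
    refine ⟨![(x + a) ⊔ (y + b), (x + c) ⊔ (y + d)], ⟨![x, y], fun i => ?_⟩, ?_, ?_⟩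
    · rw [sup_univ_two]; fin_cases i <;> simp
    · rw [ne_zeroVec_iff]; simpa using hnz
    · simpa [projPt] using hproj


/-- description of the projective column space of a nonzero `2 × 2`
tropical matrix `[[a,b],[c,d]]`, and the fact that it is always a closed convex set. -/
theorem projective_column_space_description (a b c d : Rb)
    (hA : ¬(a = ⊥ ∧ b = ⊥ ∧ c = ⊥ ∧ d = ⊥)) :
    ((¬(a = ⊥ ∧ c = ⊥) ∧ ¬(b = ⊥ ∧ d = ⊥)) →
        PC ![![a, b], ![c, d]] =
          {z : EReal | min (toE c - toE a) (toE d - toE b) ≤ z ∧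
            z ≤ max (toE c - toE a) (toE d - toE b)}) ∧
    ((a = ⊥ ∧ c = ⊥) → PC ![![a, b], ![c, d]] = {toE d - toE b}) ∧
    ((b = ⊥ ∧ d = ⊥) → PC ![![a, b], ![c, d]] = {toE c - toE a}) ∧
    IsClosedConvex (PC ![![a, b], ![c, d]]) := by
  have key2 : (a = ⊥ ∧ c = ⊥) → PC ![![a, b], ![c, d]] = {toE d - toE b} := by
    rintro ⟨rfl, rfl⟩
    have hw : ¬(b = ⊥ ∧ d = ⊥) := fun h => hA ⟨rfl, h.1, rfl, h.2⟩
    rw [PC_eq]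
    ext z
    simp only [Set.mem_setOf_eq, Set.mem_singleton_iff]
    constructor
    · rintro ⟨x, y, hnz, rfl⟩
      simp only [WithBot.add_bot, bot_sup_eq] at hnz ⊢
      induction y using WithBot.recBotCoe with
      | bot => simp at hnz
      | coe y => exact proj_scale y b d
    · rintro rfl
      refine ⟨⊥, ((0 : ℝ) : Rb), ?_, ?_⟩
      · simpa [WithBot.add_eq_bot] using hw
      · simp only [WithBot.add_bot, bot_sup_eq]
        exact proj_scale 0 b d
  have key3 : (b = ⊥ ∧ d = ⊥) → PC ![![a, b], ![c, d]] = {toE c - toE a} := by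
    rintro ⟨rfl, rfl⟩
    have hu : ¬(a = ⊥ ∧ c = ⊥) := fun h => hA ⟨h.1, rfl, h.2, rfl⟩
    rw [PC_eq]
    ext z
    simp only [Set.mem_setOf_eq, Set.mem_singleton_iff]
    constructor
    · rintro ⟨x, y, hnz, rfl⟩
      simp only [WithBot.add_bot, sup_bot_eq] at hnz ⊢
      induction x using WithBot.recBotCoe with
      | bot => simp at hnz
      | coe x => exact proj_scale x a c
    · rintro rfl
      refine ⟨((0 : ℝ) : Rb), ⊥, ?_, ?_⟩
      · simpa [WithBot.add_eq_bot] using hu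
      · simp only [WithBot.add_bot, sup_bot_eq]
        exact proj_scale 0 a c
  have key1 : (¬(a = ⊥ ∧ c = ⊥) ∧ ¬(b = ⊥ ∧ d = ⊥)) →
      PC ![![a, b], ![c, d]] =
        {z : EReal | min (toE c - toE a) (toE d - toE b) ≤ z ∧
          z ≤ max (toE c - toE a) (toE d - toE b)} := by
    rintro ⟨hu, hw⟩
    rw [PC_eq]
    ext z
    simp only [Set.mem_setOf_eq]
    constructor
    · rintro ⟨x, y, hnz, rfl⟩
      exact proj_bound a b c d hu hw x y hnz
    · rintro ⟨hz1, hz2⟩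
      exact proj_exists a b c d hu hw z hz1 hz2
  refine ⟨key1, key2, key3, ?_⟩
  by_cases h1 : a = ⊥ ∧ c = ⊥
  · exact Or.inr ⟨_, _, le_rfl, by rw [key2 h1, Set.Icc_self]⟩
  by_cases h2 : b = ⊥ ∧ d = ⊥
  · exact Or.inr ⟨_, _, le_rfl, by rw [key3 h2, Set.Icc_self]⟩
  · refine Or.inr ⟨min (toE c - toE a) (toE d - toE b),
      max (toE c - toE a) (toE d - toE b), min_le_max, ?_⟩
    rw [key1 ⟨h1, h2⟩]
    ext z
    simp [Set.mem_Icc]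
end

section
/- Let M and N be distinct closed convex subsets of ℝ̂. Then M ≅ N if and only if one of the following holds: (i) M and N are both singletons; (ii) M and N are both closed intervals with more than one point and of the same finite diameter; (iii) M and N are both closed intervals with one real endpoint and one endpoint in {−∞, +∞}. -/
open scoped Classical ENNReal

/-- The diameter of a subset of `ℝ̂` with respect to `δ` (the supremum of the empty
set being `0`). -/
noncomputable def diam (S : Set EReal) : ℝ≥0∞ := ⨆ x ∈ S, ⨆ y ∈ S, delta x y


lemma delta_coe (a b : ℝ) : delta a b = ENNReal.ofReal |a - b| := by
  simp [delta]

lemma delta_self (x : EReal) : delta x x = 0 := by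
  by_cases h : ∃ a : ℝ, x = (a : EReal)
  · obtain ⟨a, rfl⟩ := h; simp [delta]
  · simp [delta, h]

lemma delta_symm (x y : EReal) : delta x y = delta y x := by
  unfold delta
  by_cases hx : ∃ a : ℝ, x = (a : EReal) <;> by_cases hy : ∃ b : ℝ, y = (b : EReal) <;>
    simp [hx, hy, abs_sub_comm, eq_comm]

lemma delta_eq_zero_iff {x y : EReal} : delta x y = 0 ↔ x = y := by
  unfold delta
  by_cases h : (∃ a : ℝ, x = (a : EReal)) ∧ (∃ b : ℝ, y = (b : EReal))
  · obtain ⟨⟨a, rfl⟩, ⟨b, rfl⟩⟩ := h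
    rw [if_pos ⟨⟨a, rfl⟩, ⟨b, rfl⟩⟩]
    simp only [EReal.toReal_coe, ENNReal.ofReal_eq_zero, EReal.coe_eq_coe_iff]
    constructor
    · intro h
      have := abs_nonneg (a - b)
      have : |a - b| = 0 := le_antisymm h this
      have := abs_eq_zero.mp this
      linarith [sub_eq_zero.mp this]
    · rintro rfl; simp
  · rw [if_neg h]
    by_cases hxy : x = y <;> simp [hxy]

lemma delta_bot_ne {y : EReal} (h : y ≠ ⊥) : delta ⊥ y = ⊤ := by
  unfold delta
  rw [if_neg, if_neg (by exact fun hh => h hh.symm)]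
  rintro ⟨⟨a, ha⟩, -⟩
  exact (EReal.coe_ne_bot a) ha.symm

lemma delta_top_ne {y : EReal} (h : y ≠ ⊤) : delta ⊤ y = ⊤ := by
  unfold delta
  rw [if_neg, if_neg (by exact fun hh => h hh.symm)]
  rintro ⟨⟨a, ha⟩, -⟩
  exact (EReal.coe_ne_top a) ha.symm

lemma delta_ne_bot {x : EReal} (h : x ≠ ⊥) : delta x ⊥ = ⊤ := by
  rw [delta_symm]; exact delta_bot_ne h

lemma delta_ne_top' {x : EReal} (h : x ≠ ⊤) : delta x ⊤ = ⊤ := by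
  rw [delta_symm]; exact delta_top_ne h


lemma mem_Icc_coe {a b : ℝ} {x : EReal} (hx : x ∈ Set.Icc (a : EReal) b) :
    ∃ r : ℝ, a ≤ r ∧ r ≤ b ∧ x = (r : EReal) := by
  induction x using EReal.rec with
  | bot => exact absurd hx.1 (by simp)
  | coe r => exact ⟨r, by exact_mod_cast hx.1, by exact_mod_cast hx.2, rfl⟩
  | top => exact absurd hx.2 (by simp)

lemma mem_Icc_bot {b : ℝ} {x : EReal} (hx : x ∈ Set.Icc (⊥ : EReal) (b : EReal)) :
    x = ⊥ ∨ ∃ r : ℝ, r ≤ b ∧ x = (r : EReal) := by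
  induction x using EReal.rec with
  | bot => exact Or.inl rfl
  | coe r => exact Or.inr ⟨r, by exact_mod_cast hx.2, rfl⟩
  | top => exact absurd hx.2 (by simp)

lemma mem_Icc_top {a : ℝ} {x : EReal} (hx : x ∈ Set.Icc (a : EReal) (⊤ : EReal)) :
    x = ⊤ ∨ ∃ r : ℝ, a ≤ r ∧ x = (r : EReal) := by
  induction x using EReal.rec with
  | bot => exact absurd hx.1 (by simp)
  | coe r => exact Or.inr ⟨r, by exact_mod_cast hx.1, rfl⟩
  | top => exact Or.inl rfl

lemma isom_of {M N : Set EReal} (f : EReal → EReal) (h1 : Set.MapsTo f M N)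
    (h2 : Set.SurjOn f M N)
    (h3 : ∀ x ∈ M, ∀ y ∈ M, delta (f x) (f y) = delta x y) : Isom M N := by
  refine ⟨f, ⟨h1, ?_, h2⟩, h3⟩
  intro u hu v hv huv
  have : delta u v = 0 := by rw [← h3 u hu v hv, huv, delta_self]
  exact delta_eq_zero_iff.mp this

lemma Isom.symm {M N : Set EReal} (h : Isom M N) : Isom N M := by
  obtain ⟨f, hb, hd⟩ := h
  set g := Function.invFunOn f M with hg
  have hinv := hb.invOn_invFunOn
  refine ⟨g, hb.symm hinv.symm, ?_⟩
  intro x hx y hy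
  have hgx : g x ∈ M := hb.surjOn.mapsTo_invFunOn hx
  have hgy : g y ∈ M := hb.surjOn.mapsTo_invFunOn hy
  have := hd (g x) hgx (g y) hgy
  rw [hinv.2 hx, hinv.2 hy] at this; exact this.symm

lemma Isom.trans {M N P : Set EReal} (h1 : Isom M N) (h2 : Isom N P) : Isom M P := by
  obtain ⟨f, hfb, hfd⟩ := h1
  obtain ⟨g, hgb, hgd⟩ := h2
  refine ⟨g ∘ f, hgb.comp hfb, ?_⟩
  intro x hx y hy
  simp only [Function.comp_apply]
  rw [hgd _ (hfb.mapsTo hx) _ (hfb.mapsTo hy), hfd _ hx _ hy]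

lemma le_diam {S : Set EReal} {x y : EReal} (hx : x ∈ S) (hy : y ∈ S) :
    delta x y ≤ diam S := by
  calc delta x y ≤ ⨆ y ∈ S, delta x y := le_biSup _ hy
    _ ≤ diam S := le_biSup (fun x => ⨆ y ∈ S, delta x y) hx

lemma diam_le {S : Set EReal} {C : ℝ≥0∞} (h : ∀ x ∈ S, ∀ y ∈ S, delta x y ≤ C) :
    diam S ≤ C :=
  iSup₂_le fun x hx => iSup₂_le fun y hy => h x hx y hy

lemma Isom.diam_le' {M N : Set EReal} (h : Isom M N) : diam M ≤ diam N := by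
  obtain ⟨f, hb, hd⟩ := h
  refine diam_le fun x hx y hy => ?_
  rw [← hd x hx y hy]
  exact le_diam (hb.mapsTo hx) (hb.mapsTo hy)

lemma Isom.diam_eq {M N : Set EReal} (h : Isom M N) : diam M = diam N :=
  le_antisymm h.diam_le' h.symm.diam_le'

lemma diam_top_of_pair {S : Set EReal} {x y : EReal} (hx : x ∈ S) (hy : y ∈ S)
    (h : delta x y = ⊤) : diam S = ⊤ :=
  top_le_iff.mp (h ▸ le_diam hx hy)

lemma diam_Icc (a b : ℝ) (hab : a ≤ b) :
    diam (Set.Icc (a : EReal) b) = ENNReal.ofReal (b - a) := by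
  apply le_antisymm
  · refine diam_le fun x hx y hy => ?_
    obtain ⟨r, har, hrb, rfl⟩ := mem_Icc_coe hx
    obtain ⟨s, has, hsb, rfl⟩ := mem_Icc_coe hy
    rw [delta_coe]
    exact ENNReal.ofReal_le_ofReal (abs_sub_le_iff.mpr ⟨by linarith, by linarith⟩)
  · have h1 : (a : EReal) ∈ Set.Icc (a : EReal) b := ⟨le_refl _, by exact_mod_cast hab⟩
    have h2 : (b : EReal) ∈ Set.Icc (a : EReal) b := ⟨by exact_mod_cast hab, le_refl _⟩
    have := le_diam h1 h2
    rwa [delta_coe, abs_sub_comm, abs_of_nonneg (by linarith)] at this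

lemma isom_single (x y : EReal) : Isom {x} {y} := by
  refine isom_of (fun _ => y) ?_ ?_ ?_
  · intro z hz; simp
  · intro z hz; simp at hz; subst hz; exact ⟨x, rfl, rfl⟩
  · intro u hu v hv
    simp only [Set.mem_singleton_iff] at hu hv
    subst hu; subst hv
    rw [delta_self, delta_self]

lemma isom_Icc_trans (a b c : ℝ) (hab : a ≤ b) :
    Isom (Set.Icc (a : EReal) b) (Set.Icc ((a + c : ℝ) : EReal) ((b + c : ℝ) : EReal)) := by
  refine isom_of (fun z => ((z.toReal + c : ℝ) : EReal)) ?_ ?_ ?_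
  · intro z hz
    obtain ⟨r, har, hrb, rfl⟩ := mem_Icc_coe hz
    dsimp only
    rw [EReal.toReal_coe]
    exact ⟨by exact_mod_cast by linarith, by exact_mod_cast by linarith⟩
  · intro w hw
    obtain ⟨s, has, hsb, rfl⟩ := mem_Icc_coe hw
    refine ⟨((s - c : ℝ) : EReal), ⟨by exact_mod_cast by linarith, by exact_mod_cast by linarith⟩, ?_⟩
    dsimp only
    simp only [EReal.toReal_coe]
    norm_num
  · intro u hu v hv
    obtain ⟨r, -, -, rfl⟩ := mem_Icc_coe hu
    obtain ⟨s, -, -, rfl⟩ := mem_Icc_coe hv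
    simp only [EReal.toReal_coe]
    rw [delta_coe, delta_coe]
    ring_nf

lemma isom_bot_trans (b c : ℝ) :
    Isom (Set.Icc (⊥ : EReal) (b : EReal)) (Set.Icc (⊥ : EReal) ((b + c : ℝ) : EReal)) := by
  classical
  refine isom_of (fun z => if z = ⊥ then ⊥ else ((z.toReal + c : ℝ) : EReal)) ?_ ?_ ?_
  · intro z hz
    rcases mem_Icc_bot hz with rfl | ⟨r, hrb, rfl⟩
    · simp
    · dsimp only
      rw [if_neg (EReal.coe_ne_bot r), EReal.toReal_coe]
      exact ⟨bot_le, by exact_mod_cast by linarith⟩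
  · intro w hw
    rcases mem_Icc_bot hw with rfl | ⟨s, hsb, rfl⟩
    · exact ⟨⊥, ⟨le_refl _, bot_le⟩, by simp⟩
    · refine ⟨((s - c : ℝ) : EReal), ⟨bot_le, by exact_mod_cast by linarith⟩, ?_⟩
      dsimp only
      rw [if_neg (EReal.coe_ne_bot _), EReal.toReal_coe]
      norm_num
  · intro u hu v hv
    rcases mem_Icc_bot hu with rfl | ⟨r, -, rfl⟩ <;> rcases mem_Icc_bot hv with rfl | ⟨s, -, rfl⟩
    · simp [delta_self]
    · rw [if_pos rfl, if_neg (EReal.coe_ne_bot s), delta_bot_ne (EReal.coe_ne_bot _),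
        delta_bot_ne (EReal.coe_ne_bot _)]
    · rw [if_pos rfl, if_neg (EReal.coe_ne_bot r), delta_ne_bot (EReal.coe_ne_bot _),
        delta_ne_bot (EReal.coe_ne_bot _)]
    · rw [if_neg (EReal.coe_ne_bot r), if_neg (EReal.coe_ne_bot s)]
      simp only [EReal.toReal_coe]
      rw [delta_coe, delta_coe]
      ring_nf

lemma isom_bot_top (b a : ℝ) :
    Isom (Set.Icc (⊥ : EReal) (b : EReal)) (Set.Icc (a : EReal) (⊤ : EReal)) := by
  classical
  refine isom_of (fun z => if z = ⊥ then ⊤ else ((a + b - z.toReal : ℝ) : EReal)) ?_ ?_ ?_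
  · intro z hz
    rcases mem_Icc_bot hz with rfl | ⟨r, hrb, rfl⟩
    · simp
    · dsimp only
      rw [if_neg (EReal.coe_ne_bot r), EReal.toReal_coe]
      exact ⟨by exact_mod_cast by linarith, le_top⟩
  · intro w hw
    rcases mem_Icc_top hw with rfl | ⟨s, has, rfl⟩
    · exact ⟨⊥, ⟨le_refl _, bot_le⟩, by simp⟩
    · refine ⟨((a + b - s : ℝ) : EReal), ⟨bot_le, by exact_mod_cast by linarith⟩, ?_⟩
      dsimp only
      rw [if_neg (EReal.coe_ne_bot _), EReal.toReal_coe]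
      norm_num
  · intro u hu v hv
    rcases mem_Icc_bot hu with rfl | ⟨r, -, rfl⟩ <;> rcases mem_Icc_bot hv with rfl | ⟨s, -, rfl⟩
    · simp [delta_self]
    · rw [if_pos rfl, if_neg (EReal.coe_ne_bot s), delta_top_ne (EReal.coe_ne_top _),
        delta_bot_ne (EReal.coe_ne_bot _)]
    · rw [if_pos rfl, if_neg (EReal.coe_ne_bot r), delta_ne_top' (EReal.coe_ne_top _),
        delta_ne_bot (EReal.coe_ne_bot _)]
    · rw [if_neg (EReal.coe_ne_bot r), if_neg (EReal.coe_ne_bot s)]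
      simp only [EReal.toReal_coe]
      rw [delta_coe, delta_coe]
      congr 1
      rw [abs_sub_comm]
      ring_nf


lemma classify {S : Set EReal} (hS : IsClosedConvex S) :
    S = ∅ ∨ (∃ x, S = {x}) ∨ ∃ x y : EReal, x < y ∧ S = Set.Icc x y := by
  rcases hS with h | ⟨x, y, hxy, h⟩
  · exact Or.inl h
  rcases lt_or_eq_of_le hxy with hlt | rfl
  · exact Or.inr (Or.inr ⟨x, y, hlt, h⟩)
  · exact Or.inr (Or.inl ⟨x, by rw [h, Set.Icc_self]⟩)

lemma classify_pair {x y : EReal} (h : x < y) :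
    (∃ a b : ℝ, a < b ∧ x = (a : EReal) ∧ y = (b : EReal)) ∨
    (∃ b : ℝ, x = ⊥ ∧ y = (b : EReal)) ∨
    (∃ a : ℝ, x = (a : EReal) ∧ y = ⊤) ∨ (x = ⊥ ∧ y = ⊤) := by
  induction x using EReal.rec with
  | bot =>
    induction y using EReal.rec with
    | bot => exact absurd h (lt_irrefl _)
    | coe b => exact Or.inr (Or.inl ⟨b, rfl, rfl⟩)
    | top => exact Or.inr (Or.inr (Or.inr ⟨rfl, rfl⟩))
  | coe a =>
    induction y using EReal.rec with
    | bot => exact absurd h (by simp)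
    | coe b => exact Or.inl ⟨a, b, by exact_mod_cast h, rfl, rfl⟩
    | top => exact Or.inr (Or.inr (Or.inl ⟨a, rfl, rfl⟩))
  | top =>
    induction y using EReal.rec with
    | bot => exact absurd h (by simp)
    | coe b => exact absurd h (by simp)
    | top => exact absurd h (lt_irrefl _)

lemma not_triple_lower (b : ℝ) {x y z : EReal} (hx : x ∈ Set.Icc (⊥ : EReal) (b : EReal))
    (hy : y ∈ Set.Icc (⊥ : EReal) (b : EReal)) (hz : z ∈ Set.Icc (⊥ : EReal) (b : EReal))
    (h1 : delta x y = ⊤) (h2 : delta x z = ⊤) (h3 : delta y z = ⊤) : False := by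
  rcases mem_Icc_bot hx with rfl | ⟨r, -, rfl⟩ <;>
    rcases mem_Icc_bot hy with rfl | ⟨s, -, rfl⟩ <;>
    rcases mem_Icc_bot hz with rfl | ⟨t, -, rfl⟩
  · rw [delta_self] at h1; exact (by simp : (0:ℝ≥0∞) ≠ ⊤) h1
  · rw [delta_self] at h1; exact (by simp : (0:ℝ≥0∞) ≠ ⊤) h1
  · rw [delta_self] at h2; exact (by simp : (0:ℝ≥0∞) ≠ ⊤) h2
  · rw [delta_coe] at h3; exact ENNReal.ofReal_ne_top h3
  · rw [delta_self] at h3; exact (by simp : (0:ℝ≥0∞) ≠ ⊤) h3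
  · rw [delta_coe] at h2; exact ENNReal.ofReal_ne_top h2
  · rw [delta_coe] at h1; exact ENNReal.ofReal_ne_top h1
  · rw [delta_coe] at h1; exact ENNReal.ofReal_ne_top h1

lemma not_triple_upper (a : ℝ) {x y z : EReal} (hx : x ∈ Set.Icc (a : EReal) (⊤ : EReal))
    (hy : y ∈ Set.Icc (a : EReal) (⊤ : EReal)) (hz : z ∈ Set.Icc (a : EReal) (⊤ : EReal))
    (h1 : delta x y = ⊤) (h2 : delta x z = ⊤) (h3 : delta y z = ⊤) : False := by
  rcases mem_Icc_top hx with rfl | ⟨r, -, rfl⟩ <;>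
    rcases mem_Icc_top hy with rfl | ⟨s, -, rfl⟩ <;>
    rcases mem_Icc_top hz with rfl | ⟨t, -, rfl⟩
  · rw [delta_self] at h1; exact (by simp : (0:ℝ≥0∞) ≠ ⊤) h1
  · rw [delta_self] at h1; exact (by simp : (0:ℝ≥0∞) ≠ ⊤) h1
  · rw [delta_self] at h2; exact (by simp : (0:ℝ≥0∞) ≠ ⊤) h2
  · rw [delta_coe] at h3; exact ENNReal.ofReal_ne_top h3
  · rw [delta_self] at h3; exact (by simp : (0:ℝ≥0∞) ≠ ⊤) h3
  · rw [delta_coe] at h2; exact ENNReal.ofReal_ne_top h2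
  · rw [delta_coe] at h1; exact ENNReal.ofReal_ne_top h1
  · rw [delta_coe] at h1; exact ENNReal.ofReal_ne_top h1

lemma isom_full_push {N : Set EReal} (h : Isom (Set.Icc (⊥ : EReal) (⊤ : EReal)) N) :
    ∃ x ∈ N, ∃ y ∈ N, ∃ z ∈ N, delta x y = ⊤ ∧ delta x z = ⊤ ∧ delta y z = ⊤ := by
  obtain ⟨f, hb, hd⟩ := h
  have m1 : (⊥ : EReal) ∈ Set.Icc (⊥ : EReal) ⊤ := ⟨le_refl _, le_top⟩
  have m2 : (⊤ : EReal) ∈ Set.Icc (⊥ : EReal) ⊤ := ⟨bot_le, le_refl _⟩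
  have m3 : ((0 : ℝ) : EReal) ∈ Set.Icc (⊥ : EReal) ⊤ := ⟨bot_le, le_top⟩
  refine ⟨f ⊥, hb.mapsTo m1, f ⊤, hb.mapsTo m2, f ((0:ℝ) : EReal), hb.mapsTo m3, ?_, ?_, ?_⟩
  · rw [hd _ m1 _ m2, delta_bot_ne (by simp)]
  · rw [hd _ m1 _ m3, delta_bot_ne (EReal.coe_ne_bot 0)]
  · rw [hd _ m2 _ m3, delta_top_ne (EReal.coe_ne_top 0)]


/-- two distinct closed convex subsets of `ℝ̂` are isometric iff they are
both singletons, or both closed intervals with more than one point and the same finite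
diameter, or both closed intervals with one real endpoint and one infinite endpoint. -/
theorem isometric_closed_convex_characterisation (M N : Set EReal)
    (hM : IsClosedConvex M) (hN : IsClosedConvex N) (hMN : M ≠ N) :
    Isom M N ↔
      ((∃ x, M = {x}) ∧ (∃ y, N = {y})) ∨
      ((∃ x ∈ M, ∃ y ∈ M, x ≠ y) ∧ (∃ x ∈ N, ∃ y ∈ N, x ≠ y) ∧
        diam M = diam N ∧ diam M ≠ ⊤) ∨
      ((∃ a : ℝ, M = Set.Icc ⊥ (a : EReal) ∨ M = Set.Icc (a : EReal) ⊤) ∧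
        (∃ b : ℝ, N = Set.Icc ⊥ (b : EReal) ∨ N = Set.Icc (b : EReal) ⊤)) := by
  constructor
  · intro h
    have h2 := h
    obtain ⟨f, hb, hd⟩ := h2
    rcases classify hM with rfl | ⟨x, hMx⟩ | ⟨x1, y1, hxy1, rfl⟩
    · -- M = ∅
      exfalso
      apply hMN
      rw [← hb.image_eq, Set.image_empty]
    · -- M a singleton
      refine Or.inl ⟨⟨x, hMx⟩, ⟨f x, ?_⟩⟩
      rw [← hb.image_eq, hMx, Set.image_singleton]
    · -- M = Icc x1 y1, x1 < y1
      have hm1 : x1 ∈ Set.Icc x1 y1 := Set.left_mem_Icc.mpr hxy1.le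
      have hm2 : y1 ∈ Set.Icc x1 y1 := Set.right_mem_Icc.mpr hxy1.le
      rcases classify hN with rfl | ⟨y, hNy⟩ | ⟨x2, y2, hxy2, rfl⟩
      · exact absurd (hb.mapsTo hm1) (Set.notMem_empty _)
      · -- N a singleton : impossible
        exfalso
        have e1 : f x1 = y := by have := hb.mapsTo hm1; rwa [hNy, Set.mem_singleton_iff] at this
        have e2 : f y1 = y := by have := hb.mapsTo hm2; rwa [hNy, Set.mem_singleton_iff] at this
        have : delta x1 y1 = 0 := by rw [← hd _ hm1 _ hm2, e1, e2, delta_self]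
        exact hxy1.ne (delta_eq_zero_iff.mp this)
      · -- both proper intervals
        have hn1 : x2 ∈ Set.Icc x2 y2 := Set.left_mem_Icc.mpr hxy2.le
        have hn2 : y2 ∈ Set.Icc x2 y2 := Set.right_mem_Icc.mpr hxy2.le
        by_cases hdm : diam (Set.Icc x1 y1) = ⊤
        · -- infinite diameter: half-lines or full line
          have hdn : diam (Set.Icc x2 y2) = ⊤ := h.diam_eq ▸ hdm
          rcases classify_pair hxy1 with ⟨a, b, hab, rfl, rfl⟩ | ⟨b, rfl, rfl⟩ |
            ⟨a, rfl, rfl⟩ | ⟨rfl, rfl⟩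
          · exact absurd hdm (by rw [diam_Icc a b hab.le]; exact ENNReal.ofReal_ne_top)
          · -- M lower half-line
            rcases classify_pair hxy2 with ⟨c, d, hcd, rfl, rfl⟩ | ⟨d, rfl, rfl⟩ |
              ⟨c, rfl, rfl⟩ | ⟨rfl, rfl⟩
            · exact absurd hdn (by rw [diam_Icc c d hcd.le]; exact ENNReal.ofReal_ne_top)
            · exact Or.inr (Or.inr ⟨⟨b, Or.inl rfl⟩, ⟨d, Or.inl rfl⟩⟩)
            · exact Or.inr (Or.inr ⟨⟨b, Or.inl rfl⟩, ⟨c, Or.inr rfl⟩⟩)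
            · exfalso
              obtain ⟨u, hu, v, hv, w, hw, d1, d2, d3⟩ := isom_full_push h.symm
              exact not_triple_lower b hu hv hw d1 d2 d3
          · -- M upper half-line
            rcases classify_pair hxy2 with ⟨c, d, hcd, rfl, rfl⟩ | ⟨d, rfl, rfl⟩ |
              ⟨c, rfl, rfl⟩ | ⟨rfl, rfl⟩
            · exact absurd hdn (by rw [diam_Icc c d hcd.le]; exact ENNReal.ofReal_ne_top)
            · exact Or.inr (Or.inr ⟨⟨a, Or.inr rfl⟩, ⟨d, Or.inl rfl⟩⟩)
            · exact Or.inr (Or.inr ⟨⟨a, Or.inr rfl⟩, ⟨c, Or.inr rfl⟩⟩)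
            · exfalso
              obtain ⟨u, hu, v, hv, w, hw, d1, d2, d3⟩ := isom_full_push h.symm
              exact not_triple_upper a hu hv hw d1 d2 d3
          · -- M full line
            rcases classify_pair hxy2 with ⟨c, d, hcd, rfl, rfl⟩ | ⟨d, rfl, rfl⟩ |
              ⟨c, rfl, rfl⟩ | ⟨rfl, rfl⟩
            · exact absurd hdn (by rw [diam_Icc c d hcd.le]; exact ENNReal.ofReal_ne_top)
            · exfalso
              obtain ⟨u, hu, v, hv, w, hw, d1, d2, d3⟩ := isom_full_push h
              exact not_triple_lower d hu hv hw d1 d2 d3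
            · exfalso
              obtain ⟨u, hu, v, hv, w, hw, d1, d2, d3⟩ := isom_full_push h
              exact not_triple_upper c hu hv hw d1 d2 d3
            · exact absurd rfl hMN
        · -- finite diameter: middle disjunct
          refine Or.inr (Or.inl ⟨⟨x1, hm1, y1, hm2, hxy1.ne⟩,
            ⟨x2, hn1, y2, hn2, hxy2.ne⟩, h.diam_eq, hdm⟩)
  · rintro (⟨⟨x, hMx⟩, ⟨y, hNy⟩⟩ | ⟨⟨u, hu, v, hv, huv⟩, ⟨u', hu', v', hv', huv'⟩, hde, hdt⟩ |
      ⟨⟨a, hMa⟩, ⟨b, hNb⟩⟩)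
    · rw [hMx, hNy]; exact isom_single x y
    · -- same finite diameter case
      rcases classify hM with rfl | ⟨x, rfl⟩ | ⟨x1, y1, hxy1, rfl⟩
      · exact absurd hu (Set.notMem_empty _)
      · rw [Set.mem_singleton_iff] at hu hv; exact absurd (hu.trans hv.symm) huv
      rcases classify hN with rfl | ⟨x, rfl⟩ | ⟨x2, y2, hxy2, rfl⟩
      · exact absurd hu' (Set.notMem_empty _)
      · rw [Set.mem_singleton_iff] at hu' hv'; exact absurd (hu'.trans hv'.symm) huv'
      have hm1 : x1 ∈ Set.Icc x1 y1 := Set.left_mem_Icc.mpr hxy1.le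
      have hm2 : y1 ∈ Set.Icc x1 y1 := Set.right_mem_Icc.mpr hxy1.le
      have hn1 : x2 ∈ Set.Icc x2 y2 := Set.left_mem_Icc.mpr hxy2.le
      have hn2 : y2 ∈ Set.Icc x2 y2 := Set.right_mem_Icc.mpr hxy2.le
      rcases classify_pair hxy1 with ⟨a, b, hab, rfl, rfl⟩ | ⟨b, rfl, rfl⟩ |
        ⟨a, rfl, rfl⟩ | ⟨rfl, rfl⟩
      · rcases classify_pair hxy2 with ⟨c, d, hcd, rfl, rfl⟩ | ⟨d, rfl, rfl⟩ |
          ⟨c, rfl, rfl⟩ | ⟨rfl, rfl⟩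
        · -- both finite
          rw [diam_Icc a b hab.le, diam_Icc c d hcd.le] at hde
          have hbd : b - a = d - c :=
            (ENNReal.ofReal_eq_ofReal_iff (by linarith) (by linarith)).mp hde
          have := isom_Icc_trans a b (c - a) hab.le
          rw [show a + (c - a) = c from by ring, show b + (c - a) = d from by linarith] at this
          exact this
        · exact absurd (diam_top_of_pair hn1 hn2 (delta_bot_ne (EReal.coe_ne_bot d)))
            (by rw [← hde] at *; exact hdt)
        · exact absurd (diam_top_of_pair hn1 hn2 (delta_ne_top' (EReal.coe_ne_top c)))
            (by rw [← hde] at *; exact hdt)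
        · exact absurd (diam_top_of_pair hn1 hn2 (delta_bot_ne (by simp)))
            (by rw [← hde] at *; exact hdt)
      · exact absurd (diam_top_of_pair hm1 hm2 (delta_bot_ne (EReal.coe_ne_bot b))) hdt
      · exact absurd (diam_top_of_pair hm1 hm2 (delta_ne_top' (EReal.coe_ne_top a))) hdt
      · exact absurd (diam_top_of_pair hm1 hm2 (delta_bot_ne (by simp))) hdt
    · -- half-lines
      rcases hMa with rfl | rfl <;> rcases hNb with rfl | rfl
      · have := isom_bot_trans a (b - a)
        rwa [show a + (b - a) = b from by ring] at this
      · exact isom_bot_top a b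
      · exact (isom_bot_top b a).symm
      · exact ((isom_bot_top 0 a).symm).trans (isom_bot_top 0 b)
end

section
/- Let M and N be closed convex subsets of ℝ̂ such that M embeds isometrically into N and N embeds isometrically into M. Then M ≅ N. -/
open scoped Classical ENNReal

section helper

lemma delta_coe_coe (u v : ℝ) : delta u v = ENNReal.ofReal |u - v| := by
  unfold delta
  rw [if_pos ⟨⟨u, rfl⟩, ⟨v, rfl⟩⟩]
  simp

@[simp] lemma delta_bot_bot : delta ⊥ ⊥ = 0 := delta_self _
@[simp] lemma delta_top_top : delta ⊤ ⊤ = 0 := delta_self _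

@[simp] lemma delta_bot_top : delta ⊥ ⊤ = ⊤ := by
  unfold delta
  rw [if_neg, if_neg]
  · simp
  · rintro ⟨⟨a, ha⟩, -⟩; exact (EReal.coe_ne_bot a) ha.symm

@[simp] lemma delta_top_bot : delta ⊤ ⊥ = ⊤ := by
  unfold delta
  rw [if_neg, if_neg]
  · simp
  · rintro ⟨⟨a, ha⟩, -⟩; exact (EReal.coe_ne_top a) ha.symm

@[simp] lemma delta_coe_bot (u : ℝ) : delta u ⊥ = ⊤ := by
  unfold delta
  rw [if_neg, if_neg]
  · exact EReal.coe_ne_bot u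
  · rintro ⟨-, ⟨a, ha⟩⟩; exact (EReal.coe_ne_bot a) ha.symm

@[simp] lemma delta_bot_coe (u : ℝ) : delta ⊥ u = ⊤ := by
  unfold delta
  rw [if_neg, if_neg]
  · exact fun h => (EReal.coe_ne_bot u) h.symm
  · rintro ⟨⟨a, ha⟩, -⟩; exact (EReal.coe_ne_bot a) ha.symm

@[simp] lemma delta_coe_top (u : ℝ) : delta u ⊤ = ⊤ := by
  unfold delta
  rw [if_neg, if_neg]
  · exact EReal.coe_ne_top u
  · rintro ⟨-, ⟨a, ha⟩⟩; exact (EReal.coe_ne_top a) ha.symm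

@[simp] lemma delta_top_coe (u : ℝ) : delta ⊤ u = ⊤ := by
  unfold delta
  rw [if_neg, if_neg]
  · exact fun h => (EReal.coe_ne_top u) h.symm
  · rintro ⟨⟨a, ha⟩, -⟩; exact (EReal.coe_ne_top a) ha.symm

lemma ereal3 (x : EReal) : x = ⊥ ∨ (∃ a : ℝ, x = a) ∨ x = ⊤ := by
  induction x using EReal.rec with
  | bot => exact Or.inl rfl
  | coe a => exact Or.inr (Or.inl ⟨a, rfl⟩)
  | top => exact Or.inr (Or.inr rfl)

lemma delta_add (x y : EReal) (c : ℝ) : delta (x + c) (y + c) = delta x y := by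
  induction x using EReal.rec <;> induction y using EReal.rec <;>
    simp only [EReal.bot_add, EReal.top_add_coe, ← EReal.coe_add,
      delta_bot_bot, delta_bot_top, delta_top_bot, delta_top_top,
      delta_bot_coe, delta_coe_bot, delta_top_coe, delta_coe_top, delta_coe_coe] <;>
    first | rfl | rw [add_sub_add_right_eq_sub]

lemma delta_sub (c : ℝ) (x y : EReal) : delta ((c:EReal) - x) ((c:EReal) - y) = delta x y := by
  induction x using EReal.rec <;> induction y using EReal.rec <;>
    simp only [EReal.coe_sub_bot, EReal.sub_top, ← EReal.coe_sub,
      delta_bot_bot, delta_bot_top, delta_top_bot, delta_top_top,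
      delta_bot_coe, delta_coe_bot, delta_top_coe, delta_coe_top, delta_coe_coe] <;>
    first | rfl | rw [sub_sub_sub_cancel_left, abs_sub_comm]

lemma add_cancelE (x : EReal) (c : ℝ) : (x + (c:EReal)) + ((-c:ℝ):EReal) = x := by
  induction x using EReal.rec with
  | bot => rw [EReal.bot_add, EReal.bot_add]
  | coe a => norm_cast; ring
  | top => rw [EReal.top_add_coe, EReal.top_add_coe]

lemma sub_cancelE (c : ℝ) (x : EReal) : (c:EReal) - ((c:EReal) - x) = x := by
  induction x using EReal.rec with
  | bot => rw [EReal.coe_sub_bot, EReal.sub_top]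
  | coe a => norm_cast; ring
  | top => rw [EReal.sub_top, EReal.coe_sub_bot]

end helper

section embed
open Set

lemma delta_real_cases (x y : EReal) (h0 : delta x y ≠ 0) (ht : delta x y ≠ ⊤) :
    ∃ p q : ℝ, x = (p:EReal) ∧ y = (q:EReal) := by
  unfold delta at h0 ht
  split_ifs at h0 ht with h1 h2
  · obtain ⟨⟨p, hp⟩, ⟨q, hq⟩⟩ := h1; exact ⟨p, q, hp, hq⟩
  · exact absurd rfl h0
  · exact absurd rfl ht

lemma exists_real_image {f : EReal → EReal} {M N : Set EReal}
    (hmap : Set.MapsTo f M N)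
    (hiso : ∀ x ∈ M, ∀ y ∈ M, delta (f x) (f y) = delta x y)
    {u v : ℝ} (huv : u ≠ v) (hu : (u:EReal) ∈ M) (hv : (v:EReal) ∈ M) :
    ∃ p q : ℝ, f u = (p:EReal) ∧ f v = (q:EReal) ∧ |p - q| = |u - v|
      ∧ (p:EReal) ∈ N ∧ (q:EReal) ∈ N := by
  have hd := hiso _ hu _ hv
  rw [delta_coe_coe] at hd
  have hpos : (0:ℝ) < |u - v| := abs_pos.2 (sub_ne_zero.2 huv)
  have h0 : delta (f u) (f v) ≠ 0 := by
    rw [hd]; exact (ENNReal.ofReal_pos.2 hpos).ne'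
  have ht : delta (f u) (f v) ≠ ⊤ := by rw [hd]; exact ENNReal.ofReal_ne_top
  obtain ⟨p, q, hp, hq⟩ := delta_real_cases _ _ h0 ht
  rw [hp, hq, delta_coe_coe] at hd
  have habs : |p - q| = |u - v| :=
    (ENNReal.ofReal_eq_ofReal_iff (abs_nonneg _) (abs_nonneg _)).1 hd
  exact ⟨p, q, hp, hq, habs, hp ▸ hmap hu, hq ▸ hmap hv⟩

/-- bounded-width contradiction helper -/
lemma widthC {f : EReal → EReal} {S : Set EReal} (a b : ℝ)
    (hmap : Set.MapsTo f S (Set.Icc (a:EReal) (b:EReal)))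
    (hiso : ∀ x ∈ S, ∀ y ∈ S, delta (f x) (f y) = delta x y)
    {u v : ℝ} (huv : u ≠ v) (hu : (u:EReal) ∈ S) (hv : (v:EReal) ∈ S) :
    |u - v| ≤ b - a := by
  obtain ⟨p, q, -, -, habs, hpN, hqN⟩ := exists_real_image hmap hiso huv hu hv
  have hp1 : a ≤ p := EReal.coe_le_coe_iff.1 hpN.1
  have hp2 : p ≤ b := EReal.coe_le_coe_iff.1 hpN.2
  have hq1 : a ≤ q := EReal.coe_le_coe_iff.1 hqN.1
  have hq2 : q ≤ b := EReal.coe_le_coe_iff.1 hqN.2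
  rw [← habs]
  rcases abs_cases (p - q) with ⟨h, -⟩ | ⟨h, -⟩ <;> linarith

lemma keyB {f : EReal → EReal} {M N : Set EReal}
    (hmap : Set.MapsTo f M N)
    (hiso : ∀ x ∈ M, ∀ y ∈ M, delta (f x) (f y) = delta x y)
    (d : ℝ) (hbd : ∀ r : ℝ, (r:EReal) ∈ N → r ≤ d)
    (u n : ℝ) (hn : 0 < n)
    (h1 : (((u - n : ℝ)):EReal) ∈ M) (h2 : ((u:ℝ):EReal) ∈ M)
    (h3 : (((u + n:ℝ)):EReal) ∈ M) :
    ∃ p : ℝ, f u = (p:EReal) ∧ p + n ≤ d := by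
  obtain ⟨p, q, hfu, hfw, e1, -, hqN⟩ :=
    exists_real_image hmap hiso (u := u) (v := u + n) (by linarith) h2 h3
  obtain ⟨s, q', hfv, hfw', e2, hsN, -⟩ :=
    exists_real_image hmap hiso (u := u - n) (v := u + n) (by linarith) h1 h3
  obtain ⟨p2, s2, hfu2, hfv2, e3, -, -⟩ :=
    exists_real_image hmap hiso (u := u) (v := u - n) (by linarith) h2 h1
  have hq' : q' = q := by
    have := hfw'.symm.trans hfw; exact_mod_cast this
  have hp2 : p2 = p := by
    have := hfu2.symm.trans hfu; exact_mod_cast this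
  have hs2 : s2 = s := by
    have := hfv2.symm.trans hfv; exact_mod_cast this
  subst hq'; subst hp2; subst hs2
  have hq : q' ≤ d := hbd q' hqN
  have hs : s2 ≤ d := hbd s2 hsN
  have e1' : |p2 - q'| = n := by
    rw [e1, show u - (u + n) = -n from by ring, abs_neg, abs_of_pos hn]
  have e2' : |s2 - q'| = 2*n := by
    rw [e2, show u - n - (u + n) = -(2*n) from by ring, abs_neg, abs_of_pos (by linarith)]
  have e3' : |p2 - s2| = n := by
    rw [e3, show u - (u - n) = n from by ring, abs_of_pos hn]
  have b1 := abs_le.1 e1'.le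
  have b3 := abs_le.1 e3'.le
  rcases (abs_eq (by linarith : (0:ℝ) ≤ 2*n)).1 e2' with h | h
  · exact ⟨p2, hfu, by linarith [b1.1, b1.2, b3.1, b3.2]⟩
  · exact ⟨p2, hfu, by linarith [b1.1, b1.2, b3.1, b3.2]⟩

lemma keyB' {f : EReal → EReal} {M N : Set EReal}
    (hmap : Set.MapsTo f M N)
    (hiso : ∀ x ∈ M, ∀ y ∈ M, delta (f x) (f y) = delta x y)
    (c : ℝ) (hbd : ∀ r : ℝ, (r:EReal) ∈ N → c ≤ r)
    (u n : ℝ) (hn : 0 < n)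
    (h1 : (((u - n : ℝ)):EReal) ∈ M) (h2 : ((u:ℝ):EReal) ∈ M)
    (h3 : (((u + n:ℝ)):EReal) ∈ M) :
    ∃ p : ℝ, f u = (p:EReal) ∧ c ≤ p - n := by
  obtain ⟨p, q, hfu, hfw, e1, -, hqN⟩ :=
    exists_real_image hmap hiso (u := u) (v := u + n) (by linarith) h2 h3
  obtain ⟨s, q', hfv, hfw', e2, hsN, -⟩ :=
    exists_real_image hmap hiso (u := u - n) (v := u + n) (by linarith) h1 h3
  obtain ⟨p2, s2, hfu2, hfv2, e3, -, -⟩ :=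
    exists_real_image hmap hiso (u := u) (v := u - n) (by linarith) h2 h1
  have hq' : q' = q := by
    have := hfw'.symm.trans hfw; exact_mod_cast this
  have hp2 : p2 = p := by
    have := hfu2.symm.trans hfu; exact_mod_cast this
  have hs2 : s2 = s := by
    have := hfv2.symm.trans hfv; exact_mod_cast this
  subst hq'; subst hp2; subst hs2
  have hq : c ≤ q' := hbd q' hqN
  have hs : c ≤ s2 := hbd s2 hsN
  have e1' : |p2 - q'| = n := by
    rw [e1, show u - (u + n) = -n from by ring, abs_neg, abs_of_pos hn]
  have e2' : |s2 - q'| = 2*n := by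
    rw [e2, show u - n - (u + n) = -(2*n) from by ring, abs_neg, abs_of_pos (by linarith)]
  have e3' : |p2 - s2| = n := by
    rw [e3, show u - (u - n) = n from by ring, abs_of_pos hn]
  have b1 := abs_le.1 e1'.le
  have b3 := abs_le.1 e3'.le
  rcases (abs_eq (by linarith : (0:ℝ) ≤ 2*n)).1 e2' with h | h
  · exact ⟨p2, hfu, by linarith [b1.1, b1.2, b3.1, b3.2]⟩
  · exact ⟨p2, hfu, by linarith [b1.1, b1.2, b3.1, b3.2]⟩

end embed


section constr
open Set

lemma isom_of_inv {f g : EReal → EReal} {M N : Set EReal}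
    (hfg : ∀ x ∈ M, g (f x) = x) (hgf : ∀ y ∈ N, f (g y) = y)
    (hfM : Set.MapsTo f M N) (hgN : Set.MapsTo g N M)
    (hd : ∀ x ∈ M, ∀ y ∈ M, delta (f x) (f y) = delta x y) : Isom M N :=
  ⟨f, Set.InvOn.bijOn ⟨hfg, hgf⟩ hfM hgN, hd⟩

lemma isom_translate (x y : EReal) (c : ℝ) :
    Isom (Set.Icc x y) (Set.Icc (x + (c:EReal)) (y + (c:EReal))) := by
  apply isom_of_inv (g := fun z => z + ((-c:ℝ):EReal))
  · intro z _; exact add_cancelE z c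
  · intro z _
    have := add_cancelE z (-c); rwa [neg_neg] at this
  · rintro z ⟨h1, h2⟩; exact ⟨add_le_add_left h1 _, add_le_add_left h2 _⟩
  · rintro z ⟨h1, h2⟩
    constructor
    · have := add_le_add_left h1 (((-c:ℝ)):EReal)
      rwa [add_cancelE x c] at this
    · have := add_le_add_left h2 (((-c:ℝ)):EReal)
      rwa [add_cancelE y c] at this
  · intro a _ b _; exact delta_add a b c

lemma isom_reflect (x y : EReal) (c : ℝ) :
    Isom (Set.Icc x y) (Set.Icc ((c:EReal) - y) ((c:EReal) - x)) := by
  apply isom_of_inv (f := fun z => (c:EReal) - z) (g := fun z => (c:EReal) - z)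
  · intro z _; exact sub_cancelE c z
  · intro z _; exact sub_cancelE c z
  · rintro z ⟨h1, h2⟩; exact ⟨EReal.sub_le_sub le_rfl h2, EReal.sub_le_sub le_rfl h1⟩
  · rintro z ⟨h1, h2⟩
    constructor
    · have := EReal.sub_le_sub (le_refl (c:EReal)) h2
      rwa [sub_cancelE] at this
    · have := EReal.sub_le_sub (le_refl (c:EReal)) h1
      rwa [sub_cancelE] at this
  · intro a _ b _; exact delta_sub c a b

end constr



section main
open Set

lemma memU (r : ℝ) : (r:EReal) ∈ Set.Icc (⊥:EReal) (⊤:EReal) := ⟨bot_le, le_top⟩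

lemma memL {b r : ℝ} (h : r ≤ b) : (r:EReal) ∈ Set.Icc (⊥:EReal) (b:EReal) :=
  ⟨bot_le, EReal.coe_le_coe_iff.2 h⟩

lemma memR {a r : ℝ} (h : a ≤ r) : (r:EReal) ∈ Set.Icc (a:EReal) (⊤:EReal) :=
  ⟨EReal.coe_le_coe_iff.2 h, le_top⟩

lemma memB {a b r : ℝ} (h1 : a ≤ r) (h2 : r ≤ b) :
    (r:EReal) ∈ Set.Icc (a:EReal) (b:EReal) :=
  ⟨EReal.coe_le_coe_iff.2 h1, EReal.coe_le_coe_iff.2 h2⟩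

lemma fromL {b r : ℝ} (h : (r:EReal) ∈ Set.Icc (⊥:EReal) (b:EReal)) : r ≤ b :=
  EReal.coe_le_coe_iff.1 h.2

lemma fromR {a r : ℝ} (h : (r:EReal) ∈ Set.Icc (a:EReal) (⊤:EReal)) : a ≤ r :=
  EReal.coe_le_coe_iff.1 h.1


/-- isometric embedding is antisymmetric on closed convex subsets of `ℝ̂`:
if two closed convex sets embed isometrically into each other then they are isometric. -/
theorem isomEmbed_antisymm (M N : Set EReal)
    (hM : IsClosedConvex M) (hN : IsClosedConvex N)
    (hMN : IsomEmbed M N) (hNM : IsomEmbed N M) : Isom M N := by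
  obtain ⟨f, hfmap, hfinj, hfiso⟩ := hMN
  obtain ⟨g, hgmap, hginj, hgiso⟩ := hNM
  rcases hM with hM0 | ⟨x, y, hxy, rfl⟩
  · subst hM0
    have hN0 : N = ∅ :=
      Set.eq_empty_iff_forall_notMem.2 fun z hz => absurd (hgmap hz) (Set.notMem_empty _)
    subst hN0
    exact ⟨id, Set.bijOn_empty id, fun a ha => absurd ha (Set.notMem_empty a)⟩
  rcases hN with hN0 | ⟨z, w, hzw, rfl⟩
  · subst hN0
    exact absurd (hfmap (⟨le_rfl, hxy⟩ : x ∈ Set.Icc x y)) (Set.notMem_empty _)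
  by_cases hxy' : x = y
  · subst hxy'
    have hzmem : z ∈ Set.Icc z w := ⟨le_rfl, hzw⟩
    have hwmem : w ∈ Set.Icc z w := ⟨hzw, le_rfl⟩
    have hzw' : z = w := by
      have h1 : g z = x := le_antisymm (hgmap hzmem).2 (hgmap hzmem).1
      have h2 : g w = x := le_antisymm (hgmap hwmem).2 (hgmap hwmem).1
      exact hginj hzmem hwmem (h1.trans h2.symm)
    subst hzw'
    refine ⟨fun _ => z, ⟨fun a _ => ⟨le_rfl, le_rfl⟩,
      fun a ha b hb _ => (le_antisymm ha.2 ha.1).trans (le_antisymm hb.2 hb.1).symm,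
      fun b hb => ⟨x, ⟨le_rfl, le_rfl⟩, (le_antisymm hb.2 hb.1).symm⟩⟩,
      fun a ha b hb => ?_⟩
    rw [le_antisymm ha.2 ha.1, le_antisymm hb.2 hb.1]
    show delta z z = delta x x
    rw [delta_self, delta_self]
  by_cases hzw' : z = w
  · subst hzw'
    have hxmem : x ∈ Set.Icc x y := ⟨le_rfl, hxy⟩
    have hymem : y ∈ Set.Icc x y := ⟨hxy, le_rfl⟩
    have h1 : f x = z := le_antisymm (hfmap hxmem).2 (hfmap hxmem).1
    have h2 : f y = z := le_antisymm (hfmap hymem).2 (hfmap hymem).1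
    exact absurd (hfinj hxmem hymem (h1.trans h2.symm)) hxy'
  have hxy'' : x < y := lt_of_le_of_ne hxy hxy'
  have hzw'' : z < w := lt_of_le_of_ne hzw hzw'
  clear hxy hzw hxy' hzw' hfinj hginj
  rcases ereal3 x with rfl | ⟨a, rfl⟩ | rfl
  · -- x = ⊥
    rcases ereal3 y with rfl | ⟨b, rfl⟩ | rfl
    · exact absurd hxy'' (lt_irrefl _)
    · -- M = L b
      rcases ereal3 z with rfl | ⟨c, rfl⟩ | rfl
      · rcases ereal3 w with rfl | ⟨d, rfl⟩ | rfl
        · exact absurd hzw'' (lt_irrefl _)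
        · -- N = L d : translate
          have h := isom_translate ⊥ (b:EReal) (d - b)
          rwa [EReal.bot_add,
            show (b:EReal) + ((d - b:ℝ):EReal) = (d:EReal) from by
              exact_mod_cast (by ring : b + (d - b) = d)] at h
        · -- N = U : contradiction
          exfalso
          obtain ⟨p, hp, hple⟩ := keyB hgmap hgiso b (fun r h => fromL h) 0 1 one_pos
            (memU _) (memU _) (memU _)
          obtain ⟨q, hq, hqle⟩ := keyB hgmap hgiso b (fun r h => fromL h) 0 (b - p + 1)
            (by linarith) (memU _) (memU _) (memU _)
          have hqp : q = p := by have := hq.symm.trans hp; exact_mod_cast this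
          rw [hqp] at hqle; linarith
      · rcases ereal3 w with rfl | ⟨d, rfl⟩ | rfl
        · exact absurd hzw'' (not_lt_bot)
        · -- N = B c d : contradiction
          exfalso
          have hcd : c < d := EReal.coe_lt_coe_iff.1 hzw''
          have hw := widthC c d hfmap hfiso
            (show b ≠ b - (d - c) - 1 from by intro h; linarith)
            (memL le_rfl) (memL (by linarith))
          rw [show b - (b - (d - c) - 1) = d - c + 1 from by ring,
            abs_of_pos (by linarith)] at hw
          linarith
        · -- N = R c : reflect
          have h := isom_reflect ⊥ (b:EReal) (c + b)
          rwa [show ((c + b:ℝ):EReal) - (b:EReal) = (c:EReal) from by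
              exact_mod_cast (by ring : c + b - b = c), EReal.coe_sub_bot] at h
      · exact absurd hzw'' (not_top_lt)
    · -- M = U
      rcases ereal3 z with rfl | ⟨c, rfl⟩ | rfl
      · rcases ereal3 w with rfl | ⟨d, rfl⟩ | rfl
        · exact absurd hzw'' (lt_irrefl _)
        · -- N = L d : contradiction (f : U → L d)
          exfalso
          obtain ⟨p, hp, hple⟩ := keyB hfmap hfiso d (fun r h => fromL h) 0 1 one_pos
            (memU _) (memU _) (memU _)
          obtain ⟨q, hq, hqle⟩ := keyB hfmap hfiso d (fun r h => fromL h) 0 (d - p + 1)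
            (by linarith) (memU _) (memU _) (memU _)
          have hqp : q = p := by have := hq.symm.trans hp; exact_mod_cast this
          rw [hqp] at hqle; linarith
        · -- N = U : identity
          have h := isom_translate (⊥:EReal) (⊤:EReal) 0
          rwa [EReal.bot_add, EReal.top_add_coe] at h
      · rcases ereal3 w with rfl | ⟨d, rfl⟩ | rfl
        · exact absurd hzw'' (not_lt_bot)
        · -- N = B c d : contradiction (f : U → B)
          exfalso
          have hcd : c < d := EReal.coe_lt_coe_iff.1 hzw''
          have hw := widthC c d hfmap hfiso
            (show (0:ℝ) ≠ d - c + 1 from by intro h; linarith)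
            (memU _) (memU _)
          rw [show (0:ℝ) - (d - c + 1) = -(d - c + 1) from by ring, abs_neg,
            abs_of_pos (by linarith)] at hw
          linarith
        · -- N = R c : contradiction (f : U → R c)
          exfalso
          obtain ⟨p, hp, hple⟩ := keyB' hfmap hfiso c (fun r h => fromR h) 0 1 one_pos
            (memU _) (memU _) (memU _)
          obtain ⟨q, hq, hqle⟩ := keyB' hfmap hfiso c (fun r h => fromR h) 0 (p - c + 1)
            (by linarith) (memU _) (memU _) (memU _)
          have hqp : q = p := by have := hq.symm.trans hp; exact_mod_cast this
          rw [hqp] at hqle; linarith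
      · exact absurd hzw'' (not_top_lt)
  · -- x = a real
    rcases ereal3 y with rfl | ⟨b, rfl⟩ | rfl
    · exact absurd hxy'' (not_lt_bot)
    · -- M = B a b
      have hab : a < b := EReal.coe_lt_coe_iff.1 hxy''
      rcases ereal3 z with rfl | ⟨c, rfl⟩ | rfl
      · rcases ereal3 w with rfl | ⟨d, rfl⟩ | rfl
        · exact absurd hzw'' (lt_irrefl _)
        · -- N = L d : contradiction (g : L d → B a b)
          exfalso
          have hw := widthC a b hgmap hgiso
            (show d ≠ d - (b - a) - 1 from by intro h; linarith)
            (memL le_rfl) (memL (by linarith))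
          rw [show d - (d - (b - a) - 1) = b - a + 1 from by ring,
            abs_of_pos (by linarith)] at hw
          linarith
        · -- N = U : contradiction (g : U → B a b)
          exfalso
          have hw := widthC a b hgmap hgiso
            (show (0:ℝ) ≠ b - a + 1 from by intro h; linarith)
            (memU _) (memU _)
          rw [show (0:ℝ) - (b - a + 1) = -(b - a + 1) from by ring, abs_neg,
            abs_of_pos (by linarith)] at hw
          linarith
      · rcases ereal3 w with rfl | ⟨d, rfl⟩ | rfl
        · exact absurd hzw'' (not_lt_bot)
        · -- N = B c d : lengths then translate
          have hcd : c < d := EReal.coe_lt_coe_iff.1 hzw''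
          have h1 := widthC c d hfmap hfiso (show a ≠ b from hab.ne)
            (memB le_rfl hab.le) (memB hab.le le_rfl)
          have h2 := widthC a b hgmap hgiso (show c ≠ d from hcd.ne)
            (memB le_rfl hcd.le) (memB hcd.le le_rfl)
          rw [abs_of_neg (by linarith : a - b < 0)] at h1
          rw [abs_of_neg (by linarith : c - d < 0)] at h2
          have h := isom_translate (a:EReal) (b:EReal) (c - a)
          rwa [show (a:EReal) + ((c - a:ℝ):EReal) = (c:EReal) from by
              exact_mod_cast (by ring : a + (c - a) = c),
            show (b:EReal) + ((c - a:ℝ):EReal) = (d:EReal) from by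
              exact_mod_cast (by linarith : b + (c - a) = d)] at h
        · -- N = R c : contradiction (g : R c → B a b)
          exfalso
          have hw := widthC a b hgmap hgiso
            (show c ≠ c + (b - a) + 1 from by intro h; linarith)
            (memR le_rfl) (memR (by linarith))
          rw [show c - (c + (b - a) + 1) = -(b - a + 1) from by ring, abs_neg,
            abs_of_pos (by linarith)] at hw
          linarith
      · exact absurd hzw'' (not_top_lt)
    · -- M = R a
      rcases ereal3 z with rfl | ⟨c, rfl⟩ | rfl
      · rcases ereal3 w with rfl | ⟨d, rfl⟩ | rfl
        · exact absurd hzw'' (lt_irrefl _)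
        · -- N = L d : reflect
          have h := isom_reflect (a:EReal) (⊤:EReal) (d + a)
          rwa [EReal.sub_top _,
            show ((d + a:ℝ):EReal) - (a:EReal) = (d:EReal) from by
              exact_mod_cast (by ring : d + a - a = d)] at h
        · -- N = U : contradiction (g : U → R a)
          exfalso
          obtain ⟨p, hp, hple⟩ := keyB' hgmap hgiso a (fun r h => fromR h) 0 1 one_pos
            (memU _) (memU _) (memU _)
          obtain ⟨q, hq, hqle⟩ := keyB' hgmap hgiso a (fun r h => fromR h) 0 (p - a + 1)
            (by linarith) (memU _) (memU _) (memU _)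
          have hqp : q = p := by have := hq.symm.trans hp; exact_mod_cast this
          rw [hqp] at hqle; linarith
      · rcases ereal3 w with rfl | ⟨d, rfl⟩ | rfl
        · exact absurd hzw'' (not_lt_bot)
        · -- N = B c d : contradiction (f : R a → B c d)
          exfalso
          have hcd : c < d := EReal.coe_lt_coe_iff.1 hzw''
          have hw := widthC c d hfmap hfiso
            (show a ≠ a + (d - c) + 1 from by intro h; linarith)
            (memR le_rfl) (memR (by linarith))
          rw [show a - (a + (d - c) + 1) = -(d - c + 1) from by ring, abs_neg,
            abs_of_pos (by linarith)] at hw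
          linarith
        · -- N = R c : translate
          have h := isom_translate (a:EReal) (⊤:EReal) (c - a)
          rwa [EReal.top_add_coe,
            show (a:EReal) + ((c - a:ℝ):EReal) = (c:EReal) from by
              exact_mod_cast (by ring : a + (c - a) = c)] at h
      · exact absurd hzw'' (not_top_lt)
  · exact absurd hxy'' (not_top_lt)
end main
end
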